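/- Let B be a base of a non-separable (connected) matroid M and let C be a circuit of M with |C \ B| = 1. If B \ C is nonempty, then M has another base B' such that |C \ B'| = 1 and |B \ B'| ≥ 2. -/

import Mathlib

open Finset

/-- A matroid on a finite ground set, given by its independent sets
satisfying the axioms (I1)-(I3). -/
structure FinMatroid (α : Type*) [DecidableEq α] where
  E : Finset α
  Indep : Finset α → Prop
  indep_empty : Indep ∅
  subset_ground : ∀ ⦃I⦄, Indep I → I ⊆ E
  indep_subset : ∀ ⦃I J⦄, Indep I → J ⊆ I → Indep J
  indep_aug : ∀ ⦃I J⦄, Indep I → Indep J → I.card < J.card →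
    ∃ e ∈ J, e ∉ I ∧ Indep (insert e I)

namespace FinMatroid

variable {α : Type*} [DecidableEq α]

/-- A base is a maximal independent set. -/
def Base (M : FinMatroid α) (B : Finset α) : Prop :=
  M.Indep B ∧ ∀ ⦃I⦄, M.Indep I → B ⊆ I → I = B

/-- A circuit is a minimal dependent subset of the ground set. -/
def Circuit (M : FinMatroid α) (C : Finset α) : Prop :=
  C ⊆ M.E ∧ ¬ M.Indep C ∧ ∀ ⦃D⦄, D ⊂ C → M.Indep D

/-- The rank of a set: the largest cardinality of an independent subset. -/
noncomputable def rank (M : FinMatroid α) (A : Finset α) : ℕ := by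
  classical exact (A.powerset.filter M.Indep).sup Finset.card

/-- The Tutte polynomial of a matroid, evaluated at `x`, `y`. -/
noncomputable def tutte {R : Type*} [CommRing R] (M : FinMatroid α) (x y : R) : R :=
  ∑ A ∈ M.E.powerset,
    (x - 1) ^ (M.rank M.E - M.rank A) * (y - 1) ^ (A.card - M.rank A)

end FinMatroid

/-- A matroid is separable if its ground set splits into two nonempty disjoint parts
such that a set is independent iff its intersections with the two parts are. -/
def FinMatroid.Separable {α : Type*} [DecidableEq α] (M : FinMatroid α) : Prop :=
  ∃ E₁ E₂ : Finset α, E₁.Nonempty ∧ E₂.Nonempty ∧ Disjoint E₁ E₂ ∧ E₁ ∪ E₂ = M.E ∧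
    ∀ I ⊆ M.E, (M.Indep I ↔ M.Indep (I ∩ E₁) ∧ M.Indep (I ∩ E₂))

namespace FinMatroid

variable {α : Type*} [DecidableEq α]

lemma exists_rank_witness (M : FinMatroid α) (A : Finset α) :
    ∃ I, I ⊆ A ∧ M.Indep I ∧ I.card = M.rank A := by
  classical
  have hne : (A.powerset.filter M.Indep).Nonempty := ⟨∅, by simp [M.indep_empty]⟩
  obtain ⟨I, hI, hEq⟩ := Finset.exists_mem_eq_sup _ hne Finset.card
  simp only [Finset.mem_filter, Finset.mem_powerset] at hI
  refine ⟨I, hI.1, hI.2, ?_⟩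
  rw [FinMatroid.rank, ← hEq]

lemma card_le_rank (M : FinMatroid α) {I A : Finset α} (hI : M.Indep I) (h : I ⊆ A) :
    I.card ≤ M.rank A := by
  classical
  rw [FinMatroid.rank]
  exact Finset.le_sup (by simp [hI, h])

lemma rank_mono (M : FinMatroid α) {A D : Finset α} (h : A ⊆ D) : M.rank A ≤ M.rank D := by
  obtain ⟨I, hIs, hIind, hIc⟩ := exists_rank_witness M A
  calc M.rank A = I.card := hIc.symm
    _ ≤ M.rank D := card_le_rank M hIind (hIs.trans h)

lemma rank_le_card (M : FinMatroid α) (A : Finset α) : M.rank A ≤ A.card := by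
  obtain ⟨I, hIs, _, hIc⟩ := exists_rank_witness M A
  rw [← hIc]
  exact Finset.card_le_card hIs

lemma indep_rank (M : FinMatroid α) {A : Finset α} (hA : M.Indep A) : M.rank A = A.card :=
  le_antisymm (rank_le_card M A) (card_le_rank M hA subset_rfl)

lemma dep_rank_lt (M : FinMatroid α) {A : Finset α} (hA : ¬ M.Indep A) : M.rank A < A.card := by
  rcases lt_or_eq_of_le (rank_le_card M A) with h | h
  · exact h
  · exfalso
    obtain ⟨I, hIs, hIind, hIc⟩ := exists_rank_witness M A
    have : I = A := Finset.eq_of_subset_of_card_le hIs (by omega)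
    exact hA (this ▸ hIind)

lemma exists_extend (M : FinMatroid α) {I D : Finset α} (hI : M.Indep I) (hID : I ⊆ D) :
    ∃ J, I ⊆ J ∧ J ⊆ D ∧ M.Indep J ∧ J.card = M.rank D := by
  classical
  have hne : (D.powerset.filter (fun J => M.Indep J ∧ I ⊆ J)).Nonempty :=
    ⟨I, by simp [hID, hI]⟩
  obtain ⟨J, hJ, hEq⟩ := Finset.exists_mem_eq_sup _ hne Finset.card
  simp only [Finset.mem_filter, Finset.mem_powerset] at hJ
  obtain ⟨hJD, hJind, hIJ⟩ := hJ
  refine ⟨J, hIJ, hJD, hJind, le_antisymm (card_le_rank M hJind hJD) ?_⟩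
  by_contra hlt
  push_neg at hlt
  obtain ⟨W, hWD, hWind, hWcard⟩ := exists_rank_witness M D
  have hcc : J.card < W.card := by omega
  obtain ⟨w, hwW, hwJ, hwind⟩ := M.indep_aug hJind hWind hcc
  have hmem : insert w J ∈ D.powerset.filter (fun J => M.Indep J ∧ I ⊆ J) := by
    simp only [Finset.mem_filter, Finset.mem_powerset]
    exact ⟨Finset.insert_subset (hWD hwW) hJD, hwind, hIJ.trans (Finset.subset_insert _ _)⟩
  have hle := Finset.le_sup (f := Finset.card) hmem
  rw [hEq, Finset.card_insert_of_notMem hwJ] at hle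
  omega

lemma exists_base_superset (M : FinMatroid α) {I : Finset α} (hI : M.Indep I) :
    ∃ B, M.Base B ∧ I ⊆ B := by
  obtain ⟨J, hIJ, hJE, hJind, hJcard⟩ := exists_extend M hI (M.subset_ground hI)
  refine ⟨J, ⟨hJind, fun K hKind hJK => ?_⟩, hIJ⟩
  have hle : K.card ≤ M.rank M.E := card_le_rank M hKind (M.subset_ground hKind)
  exact (Finset.eq_of_subset_of_card_le hJK (by omega)).symm

lemma base_card_eq (M : FinMatroid α) {B1 B2 : Finset α} (h1 : M.Base B1) (h2 : M.Base B2) :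
    B1.card = B2.card := by
  by_contra hne
  rcases Nat.lt_or_ge B1.card B2.card with h | h
  · obtain ⟨x, hx, hx2, hind⟩ := M.indep_aug h1.1 h2.1 h
    have := h1.2 hind (Finset.subset_insert x B1)
    exact hx2 (this ▸ Finset.mem_insert_self x B1)
  · have h' : B2.card < B1.card := by omega
    obtain ⟨x, hx, hx2, hind⟩ := M.indep_aug h2.1 h1.1 h'
    have := h2.2 hind (Finset.subset_insert x B2)
    exact hx2 (this ▸ Finset.mem_insert_self x B2)

lemma exists_circuit (M : FinMatroid α) :
    ∀ I : Finset α, I ⊆ M.E → ¬ M.Indep I → ∃ Z, Z ⊆ I ∧ M.Circuit Z := by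
  classical
  intro I
  induction I using Finset.strongInduction with
  | _ I ih =>
    intro hIE hdep
    by_cases h : ∀ D : Finset α, D ⊂ I → M.Indep D
    · exact ⟨I, subset_rfl, hIE, hdep, fun D hD => h D hD⟩
    · push_neg at h
      obtain ⟨D, hDI, hDdep⟩ := h
      obtain ⟨Z, hZD, hZ⟩ := ih D hDI (hDI.subset.trans hIE) hDdep
      exact ⟨Z, hZD.trans hDI.subset, hZ⟩

lemma rank_insert_eq (M : FinMatroid α) {A D : Finset α} {g : α}
    (h : M.rank (insert g A) = M.rank A) (hAD : A ⊆ D) :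
    M.rank (insert g D) = M.rank D := by
  classical
  by_cases hgD : g ∈ D
  · rw [Finset.insert_eq_self.mpr hgD]
  refine le_antisymm ?_ (rank_mono M (Finset.subset_insert g D))
  obtain ⟨IA, hIAsub, hIAind, hIAcard⟩ := exists_rank_witness M A
  obtain ⟨J, hIJ, hJD, hJind, hJcard⟩ := exists_extend M hIAind (hIAsub.trans hAD)
  by_contra hlt
  push_neg at hlt
  obtain ⟨K, hKsub, hKind, hKcard⟩ := exists_rank_witness M (insert g D)
  have hJK : J.card < K.card := by omega
  obtain ⟨z, hzK, hzJ, hzind⟩ := M.indep_aug hJind hKind hJK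
  have hz : z ∈ insert g D := hKsub hzK
  rcases Finset.mem_insert.mp hz with rfl | hzD
  · have hind2 : M.Indep (insert z IA) :=
      M.indep_subset hzind (Finset.insert_subset_insert _ hIJ)
    have hle := card_le_rank M hind2 (Finset.insert_subset_insert _ hIAsub)
    have hzIA : z ∉ IA := fun h' => hgD (hAD (hIAsub h'))
    rw [Finset.card_insert_of_notMem hzIA] at hle
    omega
  · have hle := card_le_rank M hzind (Finset.insert_subset hzD hJD)
    rw [Finset.card_insert_of_notMem hzJ] at hle
    omega

lemma rank_union_le (M : FinMatroid α) (A Y : Finset α) :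
    M.rank (A ∪ Y) ≤ M.rank A + Y.card := by
  obtain ⟨I, hIs, hIind, hIc⟩ := exists_rank_witness M (A ∪ Y)
  have h1 : I \ Y ⊆ A := by
    intro x hx
    obtain ⟨hxI, hxY⟩ := Finset.mem_sdiff.mp hx
    rcases Finset.mem_union.mp (hIs hxI) with h | h
    · exact h
    · exact absurd h hxY
  have h2 : (I \ Y).card ≤ M.rank A :=
    card_le_rank M (M.indep_subset hIind Finset.sdiff_subset) h1
  have h3 : (I ∩ Y).card ≤ Y.card := Finset.card_le_card Finset.inter_subset_right
  have h4 := Finset.card_inter_add_card_sdiff I Y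
  omega

lemma rank_union_eq (M : FinMatroid α) {A : Finset α} {Y : Finset α}
    (h : ∀ y ∈ Y, M.rank (insert y A) = M.rank A) : M.rank (A ∪ Y) = M.rank A := by
  classical
  induction Y using Finset.induction with
  | empty => simp
  | insert y Y hy ih =>
    have hu : A ∪ insert y Y = insert y (A ∪ Y) := Finset.union_insert y A Y
    rw [hu, rank_insert_eq M (h y (Finset.mem_insert_self _ _)) Finset.subset_union_left,
      ih (fun z hz => h z (Finset.mem_insert_of_mem hz))]

end FinMatroid
open FinMatroid in
/-- In a non-separable matroid, if `B` is a base and `C` a circuit with `|C \ B| = 1`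
and `B \ C ≠ ∅`, then there is another base `B'` with `|C \ B'| = 1` and `|B \ B'| ≥ 2`. -/
theorem stmt5 {α : Type*} [DecidableEq α] (M : FinMatroid α)
    (hconn : ¬ M.Separable) {B C : Finset α}
    (hB : M.Base B) (hC : M.Circuit C) (h1 : (C \ B).card = 1)
    (hne : (B \ C).Nonempty) :
    ∃ B', M.Base B' ∧ B' ≠ B ∧ (C \ B').card = 1 ∧ 2 ≤ (B \ B').card := by
  classical
  obtain ⟨e, he⟩ := Finset.card_eq_one.mp h1
  have heCB : e ∈ C \ B := by rw [he]; exact Finset.mem_singleton_self e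
  have heC : e ∈ C := (Finset.mem_sdiff.mp heCB).1
  have heB : e ∉ B := (Finset.mem_sdiff.mp heCB).2
  have hCE : C ⊆ M.E := hC.1
  have hBE : B ⊆ M.E := M.subset_ground hB.1
  by_cases hx : ∃ x f, x ∈ M.E ∧ x ∉ B ∧ x ≠ e ∧ f ∈ C ∩ B ∧ M.Indep (insert x (C.erase f))
  · obtain ⟨x, f, hxE, hxB, hxe, hf, hind⟩ := hx
    have hfC : f ∈ C := (Finset.mem_inter.mp hf).1
    have hfB : f ∈ B := (Finset.mem_inter.mp hf).2
    obtain ⟨B', hB', hsub⟩ := exists_base_superset M hind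
    have heB' : e ∈ B' :=
      hsub (Finset.mem_insert_of_mem (Finset.mem_erase.mpr ⟨fun h => heB (h ▸ hfB), heC⟩))
    have hxB' : x ∈ B' := hsub (Finset.mem_insert_self _ _)
    have hfB' : f ∉ B' := by
      intro hfB'
      have hCB' : C ⊆ B' := by
        intro c hc
        by_cases hcf : c = f
        · exact hcf ▸ hfB'
        · exact hsub (Finset.mem_insert_of_mem (Finset.mem_erase.mpr ⟨hcf, hc⟩))
      exact hC.2.1 (M.indep_subset hB'.1 hCB')
    have hCB' : C \ B' = {f} := by
      apply Finset.Subset.antisymm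
      · intro c hc
        obtain ⟨hc1, hc2⟩ := Finset.mem_sdiff.mp hc
        rw [Finset.mem_singleton]
        by_contra hcf
        exact hc2 (hsub (Finset.mem_insert_of_mem (Finset.mem_erase.mpr ⟨hcf, hc1⟩)))
      · intro c hc
        rw [Finset.mem_singleton] at hc
        exact hc ▸ Finset.mem_sdiff.mpr ⟨hfC, hfB'⟩
    have hcards : B'.card = B.card := base_card_eq M hB' hB
    have hkey : ({e, x} : Finset α) ⊆ B' \ B := by
      intro z hz
      rcases Finset.mem_insert.mp hz with rfl | hz
      · exact Finset.mem_sdiff.mpr ⟨heB', heB⟩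
      · rw [Finset.mem_singleton] at hz
        exact hz ▸ Finset.mem_sdiff.mpr ⟨hxB', hxB⟩
    have h2 : 2 ≤ (B' \ B).card := by
      have hle := Finset.card_le_card hkey
      rwa [Finset.card_insert_of_notMem (by simp [Ne.symm hxe]), Finset.card_singleton] at hle
    have hsd : (B \ B').card = (B' \ B).card := by
      have h1' := Finset.card_inter_add_card_sdiff B B'
      have h2' := Finset.card_inter_add_card_sdiff B' B
      rw [Finset.inter_comm] at h2'
      omega
    refine ⟨B', hB', fun hEq => heB (hEq ▸ heB'), by rw [hCB']; simp, by omega⟩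
  · exfalso
    apply hconn
    push_neg at hx
    by_cases hS : C ∩ B = ∅
    · -- C = {e} is a loop
      have hCe : C = {e} := by
        apply Finset.Subset.antisymm
        · intro c hc
          by_cases hcB : c ∈ B
          · exact absurd (Finset.mem_inter.mpr ⟨hc, hcB⟩) (by simp [hS])
          · rw [← he]; exact Finset.mem_sdiff.mpr ⟨hc, hcB⟩
        · intro c hc
          rw [Finset.mem_singleton] at hc
          exact hc ▸ heC
      obtain ⟨g, hg⟩ := hne
      have hgB : g ∈ B := (Finset.mem_sdiff.mp hg).1
      have hge : g ≠ e := fun h => heB (h ▸ hgB)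
      refine ⟨{e}, M.E.erase e, Finset.singleton_nonempty e,
        ⟨g, Finset.mem_erase.mpr ⟨hge, hBE hgB⟩⟩, by simp, ?_, ?_⟩
      · ext w
        by_cases hw : w = e <;>
          simp [Finset.mem_union, Finset.mem_erase, hw, hCE heC]
      · intro I hIE
        constructor
        · intro hI
          exact ⟨M.indep_subset hI Finset.inter_subset_left,
            M.indep_subset hI Finset.inter_subset_left⟩
        · rintro ⟨h1', h2'⟩
          by_cases heI : e ∈ I
          · exfalso
            have hone : I ∩ {e} = {e} := by
              rw [Finset.inter_comm]; exact Finset.singleton_inter_of_mem heI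
            rw [hone] at h1'
            apply hC.2.1
            rw [hCe]
            exact h1'
          · have hIeq : I ∩ M.E.erase e = I := by
              apply Finset.inter_eq_left.mpr
              intro z hz
              exact Finset.mem_erase.mpr ⟨fun h => heI (h ▸ hz), hIE hz⟩
            rwa [hIeq] at h2'
    · -- main case
      obtain ⟨f₀, hf₀⟩ := Finset.nonempty_iff_ne_empty.mpr hS
      have hf₀C : f₀ ∈ C := (Finset.mem_inter.mp hf₀).1
      set F := M.E.filter (fun y => M.rank (insert y C) = M.rank C) with hFdef
      have hCF : C ⊆ F := fun y hy =>
        Finset.mem_filter.mpr ⟨hCE hy, by rw [Finset.insert_eq_self.mpr hy]⟩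
      have hCcard : (C ∩ B).card + 1 = C.card := by
        have := Finset.card_inter_add_card_sdiff C B
        omega
      have hrankC : M.rank C + 1 = C.card := by
        have hlt := dep_rank_lt M hC.2.1
        have hind : M.Indep (C.erase e) := hC.2.2 (Finset.erase_ssubset heC)
        have hge := card_le_rank M hind (Finset.erase_subset e C)
        rw [Finset.card_erase_of_mem heC] at hge
        omega
      have hTF : ∀ g ∈ B \ C, g ∉ F := by
        intro g hg hgF
        have hgB : g ∈ B := (Finset.mem_sdiff.mp hg).1
        have hgC : g ∉ C := (Finset.mem_sdiff.mp hg).2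
        have hrk : M.rank (insert g C) = M.rank C := (Finset.mem_filter.mp hgF).2
        have hind : M.Indep (insert g (C ∩ B)) :=
          M.indep_subset hB.1 (Finset.insert_subset hgB Finset.inter_subset_right)
        have hsub2 : insert g (C ∩ B) ⊆ insert g C :=
          Finset.insert_subset_insert g Finset.inter_subset_left
        have hle := card_le_rank M hind hsub2
        rw [Finset.card_insert_of_notMem (fun h => hgC (Finset.mem_inter.mp h).1), hrk] at hle
        omega
      have hXF : ∀ y ∈ M.E, y ∉ B → y ∉ C → y ∈ F := by
        intro y hyE hyB hyC
        have hye : y ≠ e := fun h => hyC (h ▸ heC)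
        have hdep : ¬ M.Indep (insert y (C.erase f₀)) := hx y f₀ hyE hyB hye hf₀
        have hindE : M.Indep (C.erase f₀) := hC.2.2 (Finset.erase_ssubset hf₀C)
        have hrkE : M.rank (C.erase f₀) = C.card - 1 := by
          rw [indep_rank M hindE, Finset.card_erase_of_mem hf₀C]
        have hyCE : y ∉ C.erase f₀ := fun h => hyC (Finset.mem_of_mem_erase h)
        have hlt := dep_rank_lt M hdep
        rw [Finset.card_insert_of_notMem hyCE, Finset.card_erase_of_mem hf₀C] at hlt
        have hge := rank_mono M (Finset.subset_insert y (C.erase f₀))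
        have hCpos : 1 ≤ C.card := Finset.card_pos.mpr ⟨e, heC⟩
        have heq : M.rank (insert y (C.erase f₀)) = M.rank (C.erase f₀) := by omega
        have hres := rank_insert_eq M heq (Finset.erase_subset f₀ C)
        exact Finset.mem_filter.mpr ⟨hyE, hres⟩
      have hFE : ∀ y ∈ M.E, y ∉ B \ C → y ∈ F := by
        intro y hyE hyT
        by_cases hyC : y ∈ C
        · exact hCF hyC
        · by_cases hyB : y ∈ B
          · exact absurd (Finset.mem_sdiff.mpr ⟨hyB, hyC⟩) hyT
          · exact hXF y hyE hyB hyC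
      have hrankF : M.rank F = M.rank C := by
        have h13 := rank_union_eq M (A := C) (Y := F) (fun y hy => (Finset.mem_filter.mp hy).2)
        rwa [Finset.union_eq_right.mpr hCF] at h13
      have hZF : ∀ Z, M.Circuit Z → Z ⊆ F := by
        intro Z hZ z hzZ
        by_contra hzF
        have hzE : z ∈ M.E := hZ.1 hzZ
        have hzT : z ∈ B \ C := by
          by_contra hzT
          exact hzF (hFE z hzE hzT)
        have hindz : M.Indep (Z.erase z) := hZ.2.2 (Finset.erase_ssubset hzZ)
        have h5 : M.rank (Z.erase z) = Z.card - 1 := by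
          rw [indep_rank M hindz, Finset.card_erase_of_mem hzZ]
        have h6 := dep_rank_lt M hZ.2.1
        have h7 := rank_mono M (Finset.erase_subset z Z)
        have heq : M.rank (insert z (Z.erase z)) = M.rank (Z.erase z) := by
          rw [Finset.insert_erase hzZ]; omega
        have hZEsub : Z.erase z ⊆ M.E.erase z := by
          intro w hw
          exact Finset.mem_erase.mpr ⟨(Finset.mem_erase.mp hw).1, hZ.1 (Finset.mem_of_mem_erase hw)⟩
        have h8 := rank_insert_eq M heq hZEsub
        rw [Finset.insert_erase hzE] at h8
        have hEsub : M.E.erase z ⊆ F ∪ ((B \ C).erase z) := by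
          intro w hw
          obtain ⟨hwz, hwE⟩ := Finset.mem_erase.mp hw
          by_cases hwT : w ∈ B \ C
          · exact Finset.mem_union_right _ (Finset.mem_erase.mpr ⟨hwz, hwT⟩)
          · exact Finset.mem_union_left _ (hFE w hwE hwT)
        have h9 := rank_mono M hEsub
        have h10 := rank_union_le M F ((B \ C).erase z)
        rw [Finset.card_erase_of_mem hzT] at h10
        have h11 := card_le_rank M hB.1 hBE
        have hBcard : (C ∩ B).card + (B \ C).card = B.card := by
          have := Finset.card_inter_add_card_sdiff B C
          rw [Finset.inter_comm] at this
          omega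
        have htpos : 1 ≤ (B \ C).card := Finset.card_pos.mpr hne
        omega
      refine ⟨F, B \ C, ⟨e, hCF heC⟩, hne, ?_, ?_, ?_⟩
      · rw [Finset.disjoint_left]
        intro a haF haT
        exact hTF a haT haF
      · apply Finset.Subset.antisymm
        · apply Finset.union_subset
          · exact Finset.filter_subset _ _
          · exact fun a ha => hBE (Finset.mem_sdiff.mp ha).1
        · intro y hyE
          by_cases hyT : y ∈ B \ C
          · exact Finset.mem_union_right _ hyT
          · exact Finset.mem_union_left _ (hFE y hyE hyT)
      · intro I hIE
        constructor
        · intro hI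
          exact ⟨M.indep_subset hI Finset.inter_subset_left,
            M.indep_subset hI Finset.inter_subset_left⟩
        · rintro ⟨h1', h2'⟩
          by_contra hdep
          obtain ⟨Z, hZI, hZ⟩ := exists_circuit M I hIE hdep
          have hsub3 : Z ⊆ I ∩ F := Finset.subset_inter hZI (fun z hz => hZF Z hZ hz)
          exact hZ.2.1 (M.indep_subset h1' hsub3)
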